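/- Define coefficients b_r^j by the recursion b₀⁰ = 1; b_r^j = 0 for r ∉ [0, j]; b_j^j = 1; and for 0 ≤ r < j, b_r^j = ∑_{i=r}^{j−2} b_r^i · b_{i+1}^{j−1}. Then the unique solution is b_r^j = C_{(j−r)/2} if j − r is even (where C_m is the m-th Catalan number) and b_r^j = 0 if j − r is odd. -/

import Mathlib

def SatisfiesCatalanRec (b : ℕ → ℕ → ℝ) : Prop :=
  b 0 0 = 1 ∧
  (∀ j r : ℕ, j < r → b j r = 0) ∧
  (∀ j : ℕ, b j j = 1) ∧
  (∀ j r : ℕ, r < j →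
    b j r = ∑ i ∈ Finset.Icc r (j - 2), b i r * b (j - 1) (i + 1))

noncomputable def catalanCoeff (j r : ℕ) : ℝ :=
  if r ≤ j ∧ Even (j - r) then (catalan ((j - r) / 2) : ℝ) else 0

lemma catalan_key (r m : ℕ) :
    ∑ i ∈ Finset.Icc r (r + 2*m), catalanCoeff i r * catalanCoeff (r + 2*m + 1) (i+1)
      = (catalan (m+1) : ℝ) := by
  have hIcc : Finset.Icc r (r + 2*m) = Finset.Ico r (r + 2*m + 1) := by
    rw [Finset.Ico_add_one_right_eq_Icc]
  rw [hIcc, Finset.sum_Ico_eq_sum_range]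
  have h1 : r + 2*m + 1 - r = 2*m + 1 := by omega
  rw [h1]
  have hterm : ∀ t ∈ Finset.range (2*m+1),
      catalanCoeff (r + t) r * catalanCoeff (r + 2*m + 1) (r + t + 1)
        = if Even t then (catalan (t/2) * catalan ((2*m - t)/2) : ℝ) else 0 := by
    intro t ht
    simp only [Finset.mem_range] at ht
    unfold catalanCoeff
    have h2 : r + t - r = t := by omega
    have h3 : r + 2*m + 1 - (r + t + 1) = 2*m - t := by omega
    rw [h2, h3]
    by_cases he : Even t
    · have he2 : Even (2*m - t) := by
        rw [Nat.even_iff] at he ⊢; omega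
      simp [he, he2, (by omega : r ≤ r + t), (by omega : r + t + 1 ≤ r + 2*m + 1)]
    · have hne : ¬ Even (2*m - t) := by rw [Nat.even_iff] at he ⊢; omega
      simp [he, hne]
  rw [Finset.sum_congr rfl hterm]
  have hsub : (Finset.range (m+1)).image (fun k => 2*k) ⊆ Finset.range (2*m+1) := by
    intro x hx
    simp only [Finset.mem_image, Finset.mem_range] at hx ⊢
    obtain ⟨k, hk, rfl⟩ := hx
    omega
  have himg : ∀ t ∈ Finset.range (2*m+1), t ∉ (Finset.range (m+1)).image (fun k => 2*k) →
      (if Even t then (catalan (t/2) * catalan ((2*m-t)/2) : ℝ) else 0) = 0 := by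
    intro t ht hnot
    simp only [Finset.mem_range] at ht
    simp only [Finset.mem_image, Finset.mem_range, not_exists, not_and] at hnot
    rw [if_neg]
    rintro ⟨k, hk⟩
    exact hnot k (by omega) (by omega)
  rw [← Finset.sum_subset hsub himg,
    Finset.sum_image (by intro a _ b _ h; simp only at h; omega)]
  have : ∀ k ∈ Finset.range (m+1),
      (if Even (2*k) then (catalan ((2*k)/2) * catalan ((2*m-2*k)/2) : ℝ) else 0)
        = (catalan k * catalan (m - k) : ℝ) := by
    intro k hk
    rw [if_pos (even_two_mul k), (by omega : (2*k)/2 = k),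
      (by omega : (2*m-2*k)/2 = m - k)]
  rw [Finset.sum_congr rfl this, catalan_succ]
  rw [Fin.sum_univ_eq_sum_range (fun i => catalan i * catalan (m - i))]
  push_cast
  ring

lemma catalanCoeff_sat : SatisfiesCatalanRec catalanCoeff := by
  refine ⟨by simp [catalanCoeff], ?_, ?_, ?_⟩
  · intro j r h
    unfold catalanCoeff
    rw [if_neg (fun hc => absurd hc.1 (by omega))]
  · intro j
    simp [catalanCoeff]
  · intro j r hrj
    by_cases hpar : Even (j - r)
    · -- j = r + 2(m+1)
      obtain ⟨m, hm⟩ : ∃ m, j = r + 2*m + 2 := by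
        rw [Nat.even_iff] at hpar
        exact ⟨(j - r) / 2 - 1, by omega⟩
      subst hm
      have h2 : r + 2*m + 2 - 2 = r + 2*m := by omega
      have h1 : r + 2*m + 2 - 1 = r + 2*m + 1 := by omega
      rw [h1, h2, catalan_key]
      have : r + 2*m + 2 - r = 2*(m+1) := by omega
      simp [catalanCoeff, this, (by omega : r ≤ r + 2*m + 2)]
    · -- odd case: RHS terms all vanish
      have hz : catalanCoeff j r = 0 := by
        simp [catalanCoeff, hpar]
      rw [hz]
      symm
      apply Finset.sum_eq_zero
      intro i hi
      simp only [Finset.mem_Icc] at hi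
      by_cases he : Even (i - r)
      · have h0 : catalanCoeff (j - 1) (i + 1) = 0 := by
          unfold catalanCoeff
          rw [if_neg]
          rintro ⟨h1, h2⟩
          obtain ⟨k, hk⟩ := he
          rw [Nat.even_iff] at h2
          rw [Nat.even_iff] at hpar
          omega
        rw [h0, mul_zero]
      · simp [catalanCoeff, he]

theorem catalan_recursion_unique_solution :
    SatisfiesCatalanRec catalanCoeff ∧
    ∀ b : ℕ → ℕ → ℝ, SatisfiesCatalanRec b → ∀ j r : ℕ, b j r = catalanCoeff j r := by
  refine ⟨catalanCoeff_sat, ?_⟩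
  rintro b ⟨-, hb2, hb3, hb4⟩ j
  induction j using Nat.strong_induction_on with
  | _ j ih =>
    intro r
    rcases lt_trichotomy j r with h | h | h
    · rw [hb2 j r h, (catalanCoeff_sat.2.1) j r h]
    · subst h
      rw [hb3 j, (catalanCoeff_sat.2.2.1) j]
    · rw [hb4 j r h, (catalanCoeff_sat.2.2.2) j r h]
      apply Finset.sum_congr rfl
      intro i hi
      simp only [Finset.mem_Icc] at hi
      rw [ih i (by omega), ih (j - 1) (by omega)]
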